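/- arXiv:1308.1547 — 4 statements merged into one kernel-verified Lean document; each statement's English description precedes it below -/
import Mathlib

section
/- The function z ↦ z·∫_0^∞ e^{-zt}/(t+1) dt has the asymptotic expansion ∑_{n=0}^∞ (-1)^n n!/z^n as z → ∞ along the positive real axis: for every n, the difference between the function and the n-th partial sum is O(z^{-n}) as z → +∞. -/
open MeasureTheory Real Filter Asymptotics Set
open scoped Topology

noncomputable def Iem (z : ℝ) (m : ℕ) : ℝ :=
  ∫ t in Set.Ioi (0 : ℝ), Real.exp (-z * t) / (1 + t) ^ m

lemma integ {z : ℝ} (hz : 0 < z) (m : ℕ) :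
    IntegrableOn (fun t => Real.exp (-z * t) / (1 + t) ^ m) (Set.Ioi 0) := by
  apply Integrable.mono (exp_neg_integrableOn_Ioi 0 hz)
  · apply ContinuousOn.aestronglyMeasurable ?_ measurableSet_Ioi
    apply ContinuousOn.div
    · exact Continuous.continuousOn (by continuity)
    · exact Continuous.continuousOn (by continuity)
    · intro t ht
      have h1 : (0:ℝ) < 1 + t := by have := mem_Ioi.mp ht; linarith
      positivity
  · filter_upwards [ae_restrict_mem measurableSet_Ioi] with t ht
    have h1 : (1:ℝ) ≤ (1 + t) ^ m := by
      have h2 : (1:ℝ) ≤ 1 + t := by have := mem_Ioi.mp ht; linarith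
      calc (1:ℝ) = 1 ^ m := by simp
        _ ≤ (1 + t) ^ m := pow_le_pow_left₀ zero_le_one h2 m
    rw [Real.norm_eq_abs, Real.norm_eq_abs, abs_div, abs_of_nonneg (Real.exp_pos _).le,
      abs_of_nonneg (by linarith : (0:ℝ) ≤ (1+t)^m)]
    exact div_le_self (Real.exp_pos _).le h1

lemma Iem_nonneg {z : ℝ} (m : ℕ) : 0 ≤ Iem z m := by
  apply setIntegral_nonneg measurableSet_Ioi
  intro t ht
  have h1 : (0:ℝ) < 1 + t := by have := mem_Ioi.mp ht; linarith
  positivity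

lemma int_exp {z : ℝ} (hz : 0 < z) :
    ∫ t in Set.Ioi (0:ℝ), Real.exp (-z * t) = 1 / z := by
  have hderiv : ∀ x ∈ Ici (0:ℝ),
      HasDerivAt (fun x => -Real.exp (-z * x) / z) (Real.exp (-z * x)) x := by
    intro x _
    have := (((hasDerivAt_id x).const_mul (-z)).exp).neg.div_const z
    refine this.congr_deriv ?_
    field_simp
    rfl
  have htend : Tendsto (fun x => -Real.exp (-z * x) / z) atTop (𝓝 0) := by
    have : Tendsto (fun x : ℝ => Real.exp (-z * x)) atTop (𝓝 0) :=
      tendsto_exp_atBot.comp (tendsto_id.const_mul_atTop_of_neg (neg_neg_iff_pos.2 hz))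
    simpa using (this.neg.div_const z)
  have := integral_Ioi_of_hasDerivAt_of_tendsto' hderiv
    (by simpa using exp_neg_integrableOn_Ioi 0 hz) htend
  rw [this]
  simp [neg_div]

lemma Iem_le {z : ℝ} (hz : 0 < z) (m : ℕ) : Iem z m ≤ 1 / z := by
  rw [← int_exp hz]
  apply setIntegral_mono_on (integ hz m) (by simpa using exp_neg_integrableOn_Ioi 0 hz)
    measurableSet_Ioi
  intro t ht
  have h1 : (1:ℝ) ≤ (1 + t) ^ m := by
    have h2 : (1:ℝ) ≤ 1 + t := by have := mem_Ioi.mp ht; linarith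
    calc (1:ℝ) = 1 ^ m := by simp
      _ ≤ (1 + t) ^ m := pow_le_pow_left₀ zero_le_one h2 m
  exact div_le_self (Real.exp_pos _).le h1

lemma recur {z : ℝ} (hz : 0 < z) (k : ℕ) :
    z * Iem z (k + 1) = 1 - (k + 1) * Iem z (k + 2) := by
  set f : ℝ → ℝ := fun x => -Real.exp (-z * x) / (z * (1 + x) ^ (k + 1)) with hf
  have hderiv : ∀ x ∈ Ici (0:ℝ), HasDerivAt f
      (Real.exp (-z * x) / (1 + x) ^ (k + 1)
        + ((k:ℝ) + 1) / z * (Real.exp (-z * x) / (1 + x) ^ (k + 2))) x := by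
    intro x hx
    have hx0 : (0:ℝ) ≤ x := hx
    have h1 : (0:ℝ) < 1 + x := by linarith
    have hu : HasDerivAt (fun x => -Real.exp (-z * x)) (-(Real.exp (-z * x) * (-z * 1))) x :=
      (((hasDerivAt_id x).const_mul (-z)).exp).neg
    have hv : HasDerivAt (fun x => z * (1 + x) ^ (k + 1))
        (z * (((k:ℕ) + 1 : ℕ) * (1 + x) ^ k * 1)) x :=
      (((hasDerivAt_id x).const_add 1).pow (k + 1)).const_mul z
    have hvne : z * (1 + x) ^ (k + 1) ≠ 0 := by positivity
    have := hu.div hv hvne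
    refine this.congr_deriv ?_
    have h1k : (1 + x) ^ k ≠ 0 := by positivity
    field_simp
    push_cast
    ring
  have htend : Tendsto f atTop (𝓝 0) := by
    have h1 : Tendsto (fun x : ℝ => -Real.exp (-z * x)) atTop (𝓝 (-0)) :=
      (tendsto_exp_atBot.comp (tendsto_id.const_mul_atTop_of_neg (neg_neg_iff_pos.2 hz))).neg
    have h2 : Tendsto (fun x : ℝ => (z * (1 + x) ^ (k + 1))⁻¹) atTop (𝓝 0) := by
      apply Tendsto.inv_tendsto_atTop
      apply Tendsto.const_mul_atTop hz
      exact (tendsto_pow_atTop (Nat.succ_ne_zero k)).comp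
        (tendsto_atTop_add_const_left atTop 1 tendsto_id)
    have := h1.mul h2
    simpa [hf, div_eq_mul_inv] using this
  have hint : IntegrableOn (fun x => Real.exp (-z * x) / (1 + x) ^ (k + 1)
        + ((k:ℝ) + 1) / z * (Real.exp (-z * x) / (1 + x) ^ (k + 2))) (Ioi 0) :=
    (integ hz (k + 1)).add ((integ hz (k + 2)).const_mul _)
  have key := integral_Ioi_of_hasDerivAt_of_tendsto' hderiv hint htend
  rw [integral_add (integ hz (k + 1)) ((integ hz (k + 2)).const_mul _),
    integral_const_mul] at key
  have hf0 : f 0 = -(1 / z) := by simp [hf]; ring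
  rw [hf0] at key
  have hkey : Iem z (k + 1) + ((k:ℝ) + 1) / z * Iem z (k + 2) = 1 / z := by
    rw [Iem, Iem]; linarith [key]
  have hzne : z ≠ 0 := hz.ne'
  field_simp at hkey ⊢
  push_cast
  linarith [hkey]

lemma main_id (n : ℕ) {z : ℝ} (hz : 0 < z) :
    z * Iem z 1 = (∑ k ∈ Finset.range n, (-1:ℝ) ^ k * (Nat.factorial k) / z ^ k)
      + (-1:ℝ) ^ n * (Nat.factorial n) * (z / z ^ n) * Iem z (n + 1) := by
  induction n with
  | zero => simp
  | succ n ih =>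
    have hr := recur hz n
    have hzne : z ≠ 0 := hz.ne'
    have hzn : z ^ n ≠ 0 := pow_ne_zero n hzne
    rw [ih, Finset.sum_range_succ]
    have hI : Iem z (n + 1) = (1 - ((n:ℝ) + 1) * Iem z (n + 2)) / z := by
      field_simp at hr ⊢
      linarith [hr]
    rw [hI]
    rw [Nat.factorial_succ]
    push_cast
    field_simp
    ring

theorem exp_integral_asymptotic_expansion (n : ℕ) :
    (fun z : ℝ =>
        (z * ∫ t in Set.Ioi (0 : ℝ), Real.exp (-z * t) / (t + 1)) -
          ∑ k ∈ Finset.range n, (-1 : ℝ) ^ k * (Nat.factorial k) / z ^ k)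
      =O[atTop] fun z : ℝ => z ^ (-(n : ℝ)) := by
  rw [isBigO_iff]
  refine ⟨Nat.factorial n, ?_⟩
  filter_upwards [eventually_gt_atTop (0:ℝ)] with z hz
  have hF : (z * ∫ t in Set.Ioi (0:ℝ), Real.exp (-z * t) / (t + 1)) = z * Iem z 1 := by
    simp only [Iem, pow_one]
    congr 1
    refine setIntegral_congr_fun measurableSet_Ioi fun t _ => ?_
    rw [add_comm 1 t]
  rw [hF, main_id n hz, add_comm, add_sub_assoc, sub_self, add_zero]
  have hzn : (0:ℝ) < z ^ n := pow_pos hz n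
  have habs : ‖(-1:ℝ) ^ n * (Nat.factorial n) * (z / z ^ n) * Iem z (n + 1)‖
      = ((Nat.factorial n : ℝ) * (z / z ^ n)) * Iem z (n + 1) := by
    rw [Real.norm_eq_abs, abs_mul, abs_mul, abs_mul, abs_pow, abs_neg, abs_one, one_pow,
      one_mul, abs_of_nonneg (Iem_nonneg _), abs_of_nonneg (Nat.cast_nonneg _),
      abs_of_nonneg (le_of_lt (div_pos hz hzn))]
  rw [habs]
  have hrpow : ‖z ^ (-(n : ℝ))‖ = (z ^ n)⁻¹ := by
    rw [Real.norm_eq_abs, Real.rpow_neg hz.le, Real.rpow_natCast, abs_inv,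
      abs_of_pos hzn]
  rw [hrpow]
  calc ((Nat.factorial n : ℝ) * (z / z ^ n)) * Iem z (n + 1)
      ≤ ((Nat.factorial n : ℝ) * (z / z ^ n)) * (1 / z) :=
        mul_le_mul_of_nonneg_left (Iem_le hz _) (by positivity)
    _ = (Nat.factorial n : ℝ) * (z ^ n)⁻¹ := by field_simp
end

section
/- Watson's lemma (real version): Let f be continuous on [0,∞) with f(t) = ∑_{n=0}^{N-1} a_n t^n + O(t^N) as t → 0+, and suppose |f(t)| ≤ M e^{σ t} for all t ≥ 0 for some constants M, σ. Then for real z → +∞, ∫_0^∞ t^{λ-1} f(t) e^{-zt} dt = ∑_{n=0}^{N-1} a_n Γ(n+λ)/z^{n+λ} + O(z^{-N-λ}), where λ > 0. -/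
open MeasureTheory Real Filter Asymptotics
open scoped Nat

namespace WatsonAux

open Set

lemma contOn_rpow (s : ℝ) : ContinuousOn (fun t : ℝ => t ^ (s - 1)) (Ioi 0) :=
  continuousOn_id.rpow_const (fun x hx => Or.inl (ne_of_gt hx))

lemma pow_le_factorial_mul_exp {x : ℝ} (hx : 0 ≤ x) (n : ℕ) :
    x ^ n ≤ n ! * Real.exp x := by
  have h1 : x ^ n / n ! ≤ Real.exp x := by
    calc x ^ n / n ! ≤ ∑ i ∈ Finset.range (n + 1), x ^ i / i ! := by
          refine Finset.single_le_sum (f := fun i => x ^ i / i !) ?_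
            (Finset.self_mem_range_succ n)
          intro i _
          positivity
      _ ≤ Real.exp x := Real.sum_le_exp_of_nonneg hx _
  have hn : (0 : ℝ) < n ! := by positivity
  calc x ^ n = (x ^ n / n !) * n ! := by field_simp
    _ ≤ Real.exp x * n ! := mul_le_mul_of_nonneg_right h1 hn.le
    _ = n ! * Real.exp x := mul_comm _ _

lemma aux_integrable {s r : ℝ} (hs : 0 < s) (hr : 1 ≤ r) :
    IntegrableOn (fun t : ℝ => t ^ (s - 1) * Real.exp (-(r * t))) (Ioi 0) := by
  refine (Real.GammaIntegral_convergent hs).mono' ?_ ?_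
  · exact (((contOn_rpow s).mul
      ((Real.continuous_exp.comp ((continuous_const.mul continuous_id).neg)).continuousOn)).aestronglyMeasurable
      measurableSet_Ioi)
  · filter_upwards [ae_restrict_mem measurableSet_Ioi] with t ht
    have ht0 : (0 : ℝ) < t := ht
    have h1 : Real.exp (-(r * t)) ≤ Real.exp (-t) := by
      apply Real.exp_le_exp.2
      nlinarith
    have h2 : 0 ≤ t ^ (s - 1) := Real.rpow_nonneg ht0.le _
    rw [Real.norm_eq_abs, abs_mul, abs_of_nonneg h2, abs_of_nonneg (Real.exp_pos _).le]
    calc t ^ (s - 1) * Real.exp (-(r * t)) ≤ t ^ (s - 1) * Real.exp (-t) := by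
          exact mul_le_mul_of_nonneg_left h1 h2
      _ = Real.exp (-t) * t ^ (s - 1) := mul_comm _ _

lemma aux_integral {s r : ℝ} (hs : 0 < s) (hr : 0 < r) :
    ∫ t in Ioi (0 : ℝ), t ^ (s - 1) * Real.exp (-(r * t)) = Real.Gamma s / r ^ s := by
  rw [Real.integral_rpow_mul_exp_neg_mul_Ioi hs hr, one_div, Real.inv_rpow hr.le,
    inv_mul_eq_div]

end WatsonAux

open WatsonAux Set

set_option maxHeartbeats 2000000 in
theorem watson_lemma (f : ℝ → ℝ) (a : ℕ → ℝ) (N : ℕ) (lam M σ : ℝ) (hlam : 0 < lam)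
    (hf : ContinuousOn f (Set.Ici 0))
    (hbound : ∀ t ≥ (0 : ℝ), |f t| ≤ M * Real.exp (σ * t))
    (hasymp : (fun t : ℝ => f t - ∑ n ∈ Finset.range N, a n * t ^ n)
        =O[nhdsWithin 0 (Set.Ioi 0)] fun t : ℝ => t ^ N) :
    (fun z : ℝ =>
        (∫ t in Set.Ioi (0 : ℝ), t ^ (lam - 1) * f t * Real.exp (-z * t)) -
          ∑ n ∈ Finset.range N, a n * Real.Gamma ((n : ℝ) + lam) / z ^ ((n : ℝ) + lam))
      =O[atTop] fun z : ℝ => z ^ (-(N : ℝ) - lam) := by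
  set S : ℝ → ℝ := fun t => ∑ n ∈ Finset.range N, a n * t ^ n with hS
  set g : ℝ → ℝ := fun t => f t - S t with hg
  -- basic constants
  set b : ℝ := max σ 1 with hbdef
  have hb1 : 1 ≤ b := le_max_right _ _
  have hσb : σ ≤ b := le_max_left _ _
  have hM : 0 ≤ M := by
    have h := hbound 0 le_rfl
    simp only [mul_zero, Real.exp_zero, mul_one] at h
    exact (abs_nonneg _).trans h
  set K : ℝ := ∑ n ∈ Finset.range N, |a n| * (n ! : ℝ) with hKdef
  have hK : 0 ≤ K := Finset.sum_nonneg fun n _ => by positivity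
  set A : ℝ := M + K with hAdef
  have hA : 0 ≤ A := by positivity
  -- global bound for g
  have hg_glob : ∀ t ≥ (0 : ℝ), |g t| ≤ A * Real.exp (b * t) := by
    intro t ht
    have h1 : |f t| ≤ M * Real.exp (b * t) := by
      refine (hbound t ht).trans ?_
      have : Real.exp (σ * t) ≤ Real.exp (b * t) := by
        apply Real.exp_le_exp.2
        nlinarith
      nlinarith
    have h2 : |S t| ≤ K * Real.exp (b * t) := by
      have hexp1 : Real.exp t ≤ Real.exp (b * t) := by
        apply Real.exp_le_exp.2
        nlinarith
      calc |S t| ≤ ∑ n ∈ Finset.range N, |a n * t ^ n| :=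
            Finset.abs_sum_le_sum_abs _ _
        _ ≤ ∑ n ∈ Finset.range N, |a n| * ((n ! : ℝ) * Real.exp t) := by
            refine Finset.sum_le_sum fun n _ => ?_
            rw [abs_mul, abs_pow, abs_of_nonneg ht]
            exact mul_le_mul_of_nonneg_left (pow_le_factorial_mul_exp ht n) (abs_nonneg _)
        _ = K * Real.exp t := by
            rw [hKdef, Finset.sum_mul]
            exact Finset.sum_congr rfl fun n _ => by ring
        _ ≤ K * Real.exp (b * t) := mul_le_mul_of_nonneg_left hexp1 hK
    calc |g t| ≤ |f t| + |S t| := abs_sub _ _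
      _ ≤ M * Real.exp (b * t) + K * Real.exp (b * t) := add_le_add h1 h2
      _ = A * Real.exp (b * t) := by ring
  -- local bound for g near 0
  obtain ⟨C, hC0, hCbound⟩ := hasymp.exists_nonneg
  rw [Asymptotics.isBigOWith_iff] at hCbound
  rw [eventually_nhdsWithin_iff] at hCbound
  obtain ⟨δ, hδpos, hδ⟩ := Metric.eventually_nhds_iff.mp hCbound
  set d : ℝ := δ / 2 with hddef
  have hd : 0 < d := by positivity
  have hsmall : ∀ t : ℝ, 0 < t → t ≤ d → |g t| ≤ C * t ^ N := by
    intro t ht htd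
    have hdist : dist t 0 < δ := by
      rw [Real.dist_eq, sub_zero, abs_of_pos ht]
      rw [hddef] at htd
      linarith
    have h := hδ hdist ht
    rwa [Real.norm_eq_abs, Real.norm_eq_abs, abs_pow, abs_of_pos ht] at h
  -- key pointwise bound for large z
  have key : ∀ z : ℝ, 2 * b + 2 ≤ z →
      |(∫ t in Set.Ioi (0 : ℝ), t ^ (lam - 1) * f t * Real.exp (-z * t)) -
          ∑ n ∈ Finset.range N, a n * Real.Gamma ((n : ℝ) + lam) / z ^ ((n : ℝ) + lam)|
        ≤ C * Real.Gamma ((N : ℝ) + lam) * z ^ (-(N : ℝ) - lam)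
          + (A * Real.Gamma lam) * Real.exp (-(d / 2) * z) := by
    intro z hz
    have hz0 : (0 : ℝ) < z := by linarith
    have hz1 : (1 : ℝ) ≤ z := by linarith
    have hzσ : (1 : ℝ) ≤ z - σ := by linarith
    -- integrability facts
    have Ifz : IntegrableOn (fun t : ℝ => t ^ (lam - 1) * f t * Real.exp (-z * t)) (Ioi 0) := by
      refine ((aux_integrable hlam hzσ).const_mul M).mono' ?_ ?_
      · have hc : ContinuousOn (fun t : ℝ => t ^ (lam - 1) * f t * Real.exp (-z * t))
            (Ioi 0) := by
          refine ContinuousOn.mul (ContinuousOn.mul ?_ (hf.mono Ioi_subset_Ici_self)) ?_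
          · exact contOn_rpow lam
          · exact (Real.continuous_exp.comp (by fun_prop)).continuousOn
        exact hc.aestronglyMeasurable measurableSet_Ioi
      · filter_upwards [ae_restrict_mem measurableSet_Ioi] with t ht
        have ht0 : (0 : ℝ) < t := ht
        have h2 : 0 ≤ t ^ (lam - 1) := Real.rpow_nonneg ht0.le _
        have hexp : Real.exp (σ * t) * Real.exp (-z * t) = Real.exp (-((z - σ) * t)) := by
          rw [← Real.exp_add]
          ring_nf
        rw [Real.norm_eq_abs, abs_mul, abs_mul, abs_of_nonneg h2,
          abs_of_nonneg (Real.exp_pos _).le]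
        have hft := hbound t ht0.le
        calc t ^ (lam - 1) * |f t| * Real.exp (-z * t)
            ≤ t ^ (lam - 1) * (M * Real.exp (σ * t)) * Real.exp (-z * t) :=
              mul_le_mul_of_nonneg_right (mul_le_mul_of_nonneg_left hft h2)
                (Real.exp_pos _).le
          _ = M * (t ^ (lam - 1) * Real.exp (-((z - σ) * t))) := by
              rw [← hexp]; ring
    have Imono : ∀ n : ℕ,
        IntegrableOn (fun t : ℝ => t ^ (lam - 1) * t ^ n * Real.exp (-z * t)) (Ioi 0) := by
      intro n
      refine (aux_integrable (s := (n : ℝ) + lam) (by positivity) hz1).congr_fun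
        (fun t ht => ?_) measurableSet_Ioi
      have ht0 : (0 : ℝ) < t := ht
      rw [neg_mul]
      congr 1
      rw [← Real.rpow_natCast t n, ← Real.rpow_add ht0]
      congr 1
      ring
    have Imono' : ∀ n ∈ Finset.range N,
        IntegrableOn (fun t : ℝ => a n * (t ^ (lam - 1) * t ^ n * Real.exp (-z * t)))
          (Ioi 0) := fun n _ => (Imono n).const_mul _
    have hexpand : ∀ t : ℝ, t ^ (lam - 1) * g t * Real.exp (-z * t)
        = t ^ (lam - 1) * f t * Real.exp (-z * t)
          - ∑ n ∈ Finset.range N, a n * (t ^ (lam - 1) * t ^ n * Real.exp (-z * t)) := by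
      intro t
      rw [hg, hS]
      simp only [Finset.sum_mul, Finset.mul_sum, sub_mul, mul_sub]
      congr 1
      exact Finset.sum_congr rfl fun n _ => by ring
    have Igz : IntegrableOn (fun t : ℝ => t ^ (lam - 1) * g t * Real.exp (-z * t)) (Ioi 0) := by
      exact MeasureTheory.IntegrableOn.congr_fun (Ifz.sub (integrable_finset_sum _ Imono'))
        (fun t _ => (hexpand t).symm) measurableSet_Ioi
    -- value of monomial integrals
    have hmono_int : ∀ n : ℕ,
        ∫ t in Ioi (0 : ℝ), t ^ (lam - 1) * t ^ n * Real.exp (-z * t)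
          = Real.Gamma ((n : ℝ) + lam) / z ^ ((n : ℝ) + lam) := by
      intro n
      have e1 : ∫ t in Ioi (0 : ℝ), t ^ (lam - 1) * t ^ n * Real.exp (-z * t)
          = ∫ t in Ioi (0 : ℝ), t ^ (((n : ℝ) + lam) - 1) * Real.exp (-(z * t)) := by
        refine setIntegral_congr_fun measurableSet_Ioi fun t ht => ?_
        have ht0 : (0 : ℝ) < t := ht
        rw [neg_mul]
        congr 1
        rw [← Real.rpow_natCast t n, ← Real.rpow_add ht0]
        congr 1
        ring
      rw [e1, aux_integral (by positivity) hz0]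
    -- the identity
    have hident : (∫ t in Set.Ioi (0 : ℝ), t ^ (lam - 1) * f t * Real.exp (-z * t)) -
          ∑ n ∈ Finset.range N, a n * Real.Gamma ((n : ℝ) + lam) / z ^ ((n : ℝ) + lam)
        = ∫ t in Ioi (0 : ℝ), t ^ (lam - 1) * g t * Real.exp (-z * t) := by
      have e1 : ∫ t in Ioi (0 : ℝ), t ^ (lam - 1) * g t * Real.exp (-z * t)
          = ∫ t in Ioi (0 : ℝ), (t ^ (lam - 1) * f t * Real.exp (-z * t)
              - ∑ n ∈ Finset.range N, a n * (t ^ (lam - 1) * t ^ n * Real.exp (-z * t))) :=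
        setIntegral_congr_fun measurableSet_Ioi fun t _ => hexpand t
      rw [e1, integral_sub Ifz (integrable_finset_sum _ Imono'),
        integral_finset_sum _ Imono']
      congr 1
      refine Finset.sum_congr rfl fun n _ => ?_
      rw [MeasureTheory.integral_const_mul, hmono_int n, mul_div_assoc]
    rw [hident]
    -- bound the remainder integral
    set phi : ℝ → ℝ := fun t => t ^ (lam - 1) * |g t| * Real.exp (-z * t) with hphi
    have hphieq : ∀ t ∈ Ioi (0 : ℝ),
        |t ^ (lam - 1) * g t * Real.exp (-z * t)| = phi t := by
      intro t ht
      have ht0 : (0 : ℝ) < t := ht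
      rw [hphi, abs_mul, abs_mul, abs_of_nonneg (Real.rpow_nonneg ht0.le _),
        abs_of_nonneg (Real.exp_pos _).le]
    have hphiint : IntegrableOn phi (Ioi 0) :=
      MeasureTheory.IntegrableOn.congr_fun Igz.abs hphieq measurableSet_Ioi
    have habs : |∫ t in Ioi (0 : ℝ), t ^ (lam - 1) * g t * Real.exp (-z * t)|
        ≤ ∫ t in Ioi (0 : ℝ), phi t := by
      calc |∫ t in Ioi (0 : ℝ), t ^ (lam - 1) * g t * Real.exp (-z * t)|
          ≤ ∫ t in Ioi (0 : ℝ), |t ^ (lam - 1) * g t * Real.exp (-z * t)| := by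
            simpa only [Real.norm_eq_abs] using
              MeasureTheory.norm_integral_le_integral_norm
                (μ := MeasureTheory.volume.restrict (Ioi 0))
                (fun t : ℝ => t ^ (lam - 1) * g t * Real.exp (-z * t))
        _ = ∫ t in Ioi (0 : ℝ), phi t := setIntegral_congr_fun measurableSet_Ioi hphieq
    have hsub1 : Ioc (0 : ℝ) d ⊆ Ioi 0 := Ioc_subset_Ioi_self
    have hsub2 : Ioi d ⊆ Ioi (0 : ℝ) := Ioi_subset_Ioi hd.le
    have hsplit : ∫ t in Ioi (0 : ℝ), phi t
        = (∫ t in Ioc (0 : ℝ) d, phi t) + ∫ t in Ioi d, phi t := by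
      rw [← MeasureTheory.setIntegral_union (Set.Ioc_disjoint_Ioi le_rfl) measurableSet_Ioi
        (hphiint.mono_set hsub1) (hphiint.mono_set hsub2), Set.Ioc_union_Ioi_eq_Ioi hd.le]
    have hpart1 : ∫ t in Ioc (0 : ℝ) d, phi t
        ≤ C * Real.Gamma ((N : ℝ) + lam) * z ^ (-(N : ℝ) - lam) := by
      have hInt2 : IntegrableOn
          (fun t : ℝ => C * (t ^ (((N : ℝ) + lam) - 1) * Real.exp (-(z * t)))) (Ioi 0) :=
        (aux_integrable (by positivity) hz1).const_mul C
      have step1 : ∫ t in Ioc (0 : ℝ) d, phi t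
          ≤ ∫ t in Ioc (0 : ℝ) d, C * (t ^ (((N : ℝ) + lam) - 1) * Real.exp (-(z * t))) := by
        refine setIntegral_mono_on (hphiint.mono_set hsub1) (hInt2.mono_set hsub1)
          measurableSet_Ioc fun t ht => ?_
        have ht0 : (0 : ℝ) < t := ht.1
        have hgt := hsmall t ht0 ht.2
        have hrw : t ^ (lam - 1) * (t : ℝ) ^ N = t ^ (((N : ℝ) + lam) - 1) := by
          rw [← Real.rpow_natCast t N, ← Real.rpow_add ht0]
          congr 1
          ring
        have h2 : 0 ≤ t ^ (lam - 1) := Real.rpow_nonneg ht0.le _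
        have h3 := Real.exp_pos (-z * t)
        calc phi t ≤ t ^ (lam - 1) * (C * t ^ N) * Real.exp (-z * t) := by
              simp only [hphi]
              exact mul_le_mul_of_nonneg_right (mul_le_mul_of_nonneg_left hgt h2) h3.le
          _ = C * (t ^ (((N : ℝ) + lam) - 1) * Real.exp (-(z * t))) := by
              rw [← hrw, neg_mul]; ring
      have step2 : ∫ t in Ioc (0 : ℝ) d, C * (t ^ (((N : ℝ) + lam) - 1) * Real.exp (-(z * t)))
          ≤ ∫ t in Ioi (0 : ℝ), C * (t ^ (((N : ℝ) + lam) - 1) * Real.exp (-(z * t))) := by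
        refine setIntegral_mono_set hInt2 ?_ (HasSubset.Subset.eventuallyLE hsub1)
        filter_upwards [ae_restrict_mem measurableSet_Ioi] with t ht
        have ht0 : (0 : ℝ) < t := ht
        positivity
      have step3 : ∫ t in Ioi (0 : ℝ), C * (t ^ (((N : ℝ) + lam) - 1) * Real.exp (-(z * t)))
          = C * Real.Gamma ((N : ℝ) + lam) * z ^ (-(N : ℝ) - lam) := by
        rw [MeasureTheory.integral_const_mul, aux_integral (by positivity) hz0]
        rw [show -(N : ℝ) - lam = -((N : ℝ) + lam) by ring, Real.rpow_neg hz0.le,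
          div_eq_mul_inv]
        ring
      calc ∫ t in Ioc (0 : ℝ) d, phi t ≤ _ := step1
        _ ≤ _ := step2
        _ = _ := step3
    have hpart2 : ∫ t in Ioi d, phi t
        ≤ (A * Real.Gamma lam) * Real.exp (-(d / 2) * z) := by
      have hInt2 : IntegrableOn
          (fun t : ℝ => (A * Real.exp (-(d / 2) * z)) * (t ^ (lam - 1) * Real.exp (-(1 * t))))
          (Ioi 0) := (aux_integrable hlam le_rfl).const_mul _
      have step1 : ∫ t in Ioi d, phi t
          ≤ ∫ t in Ioi d,
              (A * Real.exp (-(d / 2) * z)) * (t ^ (lam - 1) * Real.exp (-(1 * t))) := by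
        refine setIntegral_mono_on (hphiint.mono_set hsub2) (hInt2.mono_set hsub2)
          measurableSet_Ioi fun t ht => ?_
        have htd : d < t := ht
        have ht0 : (0 : ℝ) < t := hd.trans htd
        have hgt := hg_glob t ht0.le
        have h2 : 0 ≤ t ^ (lam - 1) := Real.rpow_nonneg ht0.le _
        have hexpb : Real.exp (b * t) * Real.exp (-z * t)
            ≤ Real.exp (-(d / 2) * z) * Real.exp (-(1 * t)) := by
          rw [← Real.exp_add, ← Real.exp_add]
          apply Real.exp_le_exp.2
          nlinarith [mul_nonneg (sub_nonneg.2 hz) ht0.le,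
            mul_nonneg (sub_nonneg.2 htd.le) hz0.le]
        calc phi t ≤ t ^ (lam - 1) * (A * Real.exp (b * t)) * Real.exp (-z * t) := by
              simp only [hphi]
              exact mul_le_mul_of_nonneg_right (mul_le_mul_of_nonneg_left hgt h2)
                (Real.exp_pos _).le
          _ = (t ^ (lam - 1)) * A * (Real.exp (b * t) * Real.exp (-z * t)) := by ring
          _ ≤ (t ^ (lam - 1)) * A * (Real.exp (-(d / 2) * z) * Real.exp (-(1 * t))) := by
              have hh : 0 ≤ t ^ (lam - 1) * A := by positivity
              exact mul_le_mul_of_nonneg_left hexpb hh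
          _ = (A * Real.exp (-(d / 2) * z)) * (t ^ (lam - 1) * Real.exp (-(1 * t))) := by ring
      have step2 : ∫ t in Ioi d,
            (A * Real.exp (-(d / 2) * z)) * (t ^ (lam - 1) * Real.exp (-(1 * t)))
          ≤ ∫ t in Ioi (0 : ℝ),
            (A * Real.exp (-(d / 2) * z)) * (t ^ (lam - 1) * Real.exp (-(1 * t))) := by
        refine setIntegral_mono_set hInt2 ?_ (HasSubset.Subset.eventuallyLE hsub2)
        filter_upwards [ae_restrict_mem measurableSet_Ioi] with t ht
        have ht0 : (0 : ℝ) < t := ht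
        positivity
      have step3 : ∫ t in Ioi (0 : ℝ),
            (A * Real.exp (-(d / 2) * z)) * (t ^ (lam - 1) * Real.exp (-(1 * t)))
          = (A * Real.Gamma lam) * Real.exp (-(d / 2) * z) := by
        rw [MeasureTheory.integral_const_mul, aux_integral hlam one_pos, Real.one_rpow,
          div_one]
        ring
      calc ∫ t in Ioi d, phi t ≤ _ := step1
        _ ≤ _ := step2
        _ = _ := step3
    calc |∫ t in Ioi (0 : ℝ), t ^ (lam - 1) * g t * Real.exp (-z * t)|
        ≤ ∫ t in Ioi (0 : ℝ), phi t := habs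
      _ = (∫ t in Ioc (0 : ℝ) d, phi t) + ∫ t in Ioi d, phi t := hsplit
      _ ≤ C * Real.Gamma ((N : ℝ) + lam) * z ^ (-(N : ℝ) - lam)
          + (A * Real.Gamma lam) * Real.exp (-(d / 2) * z) := add_le_add hpart1 hpart2
  -- conclude
  have h1o : (fun z : ℝ => C * Real.Gamma ((N : ℝ) + lam) * z ^ (-(N : ℝ) - lam))
      =O[atTop] fun z : ℝ => z ^ (-(N : ℝ) - lam) :=
    (isBigO_refl _ _).const_mul_left _
  have h2o : (fun z : ℝ => (A * Real.Gamma lam) * Real.exp (-(d / 2) * z))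
      =O[atTop] fun z : ℝ => z ^ (-(N : ℝ) - lam) :=
    ((isLittleO_exp_neg_mul_rpow_atTop (by positivity : (0:ℝ) < d / 2)
      _).isBigO.const_mul_left _)
  have hbig : (fun z : ℝ =>
        (∫ t in Set.Ioi (0 : ℝ), t ^ (lam - 1) * f t * Real.exp (-z * t)) -
          ∑ n ∈ Finset.range N, a n * Real.Gamma ((n : ℝ) + lam) / z ^ ((n : ℝ) + lam))
      =O[atTop] fun z : ℝ => C * Real.Gamma ((N : ℝ) + lam) * z ^ (-(N : ℝ) - lam)
          + (A * Real.Gamma lam) * Real.exp (-(d / 2) * z) := by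
    refine IsBigO.of_bound 1 ?_
    filter_upwards [eventually_ge_atTop (2 * b + 2)] with z hz
    rw [one_mul, Real.norm_eq_abs, Real.norm_eq_abs]
    exact (key z hz).trans (le_abs_self _)
  exact hbig.trans (h1o.add h2o)
end

section
/- For z > 0 and any nonnegative integer N, let f: ℝ → ℝ be continuous, even, and satisfy f(t) = ∑_{k=0}^{2N-1} c_k t^k + O(t^{2N}) uniformly for t ∈ ℝ with |f(t)| ≤ M e^{σ t²} for some σ < z/2. Then ∫_{-∞}^∞ e^{-z t²} f(t) dt = √(π/z) ∑_{k=0}^{N-1} (1/2)_k c_{2k} z^{-k} + O(z^{-N-1/2}) as z → +∞, where (1/2)_k is Pochhammer's symbol. -/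
open MeasureTheory Real Filter Asymptotics

/-- Pochhammer's symbol `(1/2)_k = (1/2)(3/2)⋯(k - 1/2)`. -/
noncomputable def pochHalf (k : ℕ) : ℝ := ∏ i ∈ Finset.range k, ((1 : ℝ) / 2 + i)

lemma pochHalf_pos (k : ℕ) : 0 < pochHalf k :=
  Finset.prod_pos fun i _ => by positivity

lemma gamma_pochHalf (k : ℕ) :
    Real.Gamma ((k : ℝ) + 1/2) = pochHalf k * Real.sqrt π := by
  induction k with
  | zero =>
      have := Real.Gamma_one_half_eq
      rw [show ((0:ℕ):ℝ) + 1/2 = 1/2 by norm_num, this]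
      simp [pochHalf]
  | succ n ih =>
      have h1 : ((n + 1 : ℕ) : ℝ) + 1/2 = ((n : ℝ) + 1/2) + 1 := by push_cast; ring
      have h2 : ((n : ℝ) + 1/2) ≠ 0 := by positivity
      rw [h1, Real.Gamma_add_one h2, ih]
      simp only [pochHalf, Finset.prod_range_succ]
      ring

lemma sqrt_pi_div {z : ℝ} (hz : 0 < z) (k : ℕ) :
    Real.sqrt (π / z) / z ^ k = Real.sqrt π * z ^ (-(k : ℝ) - 1/2) := by
  have e1 : z ^ (-(k : ℝ) - 1/2) = (z ^ k)⁻¹ * (Real.sqrt z)⁻¹ := by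
    rw [show -(k : ℝ) - 1/2 = (-(k:ℝ)) + (-(1/2 : ℝ)) by ring, Real.rpow_add hz,
      Real.rpow_neg hz.le, Real.rpow_natCast, Real.rpow_neg hz.le,
      ← Real.sqrt_eq_rpow]
  have e2 : Real.sqrt (π / z) = Real.sqrt π / Real.sqrt z :=
    Real.sqrt_div pi_pos.le z
  rw [e1, e2]
  ring

lemma integrable_pow_mul_gaussian {z : ℝ} (hz : 0 < z) (k : ℕ) :
    Integrable fun t : ℝ => t ^ k * Real.exp (-z * t ^ 2) := by
  have h : (-1 : ℝ) < (k : ℝ) := by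
    have := Nat.cast_nonneg (α := ℝ) k; linarith
  simpa [Real.rpow_natCast] using integrable_rpow_mul_exp_neg_mul_sq hz h

lemma gaussian_moment {z : ℝ} (hz : 0 < z) (k : ℕ) :
    (∫ t : ℝ, Real.exp (-z * t ^ 2) * t ^ (2 * k)) =
      Real.sqrt π * pochHalf k * z ^ (-(k : ℝ) - 1/2) := by
  have habs : ∀ t : ℝ,
      Real.exp (-z * t ^ 2) * t ^ (2 * k) =
        (fun x : ℝ => Real.exp (-z * x ^ 2) * x ^ (2 * k)) |t| := by
    intro t
    simp only [sq_abs, (even_two_mul k).pow_abs]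
  calc (∫ t : ℝ, Real.exp (-z * t ^ 2) * t ^ (2 * k))
      = ∫ t : ℝ, (fun x : ℝ => Real.exp (-z * x ^ 2) * x ^ (2 * k)) |t| := by
        simp only [← habs]
    _ = 2 * ∫ x in Set.Ioi (0:ℝ), Real.exp (-z * x ^ 2) * x ^ (2 * k) :=
        integral_comp_abs (f := fun x : ℝ => Real.exp (-z * x ^ 2) * x ^ (2 * k))
    _ = 2 * ∫ x in Set.Ioi (0:ℝ), x ^ ((2 * k : ℕ) : ℝ) * Real.exp (-z * x ^ (2:ℝ)) := by
        congr 1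
        refine setIntegral_congr_fun measurableSet_Ioi fun x hx => ?_
        rw [Real.rpow_natCast, show (2:ℝ) = ((2:ℕ):ℝ) by norm_num, Real.rpow_natCast]
        ring
    _ = 2 * (z ^ (-(((2 * k : ℕ) : ℝ) + 1) / 2) * (1 / 2) *
          Real.Gamma ((((2 * k : ℕ) : ℝ) + 1) / 2)) := by
        rw [integral_rpow_mul_exp_neg_mul_rpow two_pos ?_ hz]
        have := Nat.cast_nonneg (α := ℝ) (2 * k); linarith
    _ = Real.sqrt π * pochHalf k * z ^ (-(k : ℝ) - 1/2) := by
        rw [show (((2 * k : ℕ) : ℝ) + 1) / 2 = (k : ℝ) + 1/2 by push_cast; ring,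
          show -(((2 * k : ℕ) : ℝ) + 1) / 2 = -(k : ℝ) - 1/2 by push_cast; ring,
          gamma_pochHalf]
        ring

lemma integral_odd_zero {g : ℝ → ℝ} (hg : Integrable g)
    (hodd : ∀ t, g (-t) = -g t) : (∫ t, g t) = 0 := by
  have h1 : (∫ x in Set.Iic (0:ℝ), g x) = - ∫ x in Set.Ioi (0:ℝ), g x := by
    have h := integral_comp_neg_Iic (0:ℝ) g
    rw [neg_zero] at h
    calc (∫ x in Set.Iic (0:ℝ), g x) = ∫ x in Set.Iic (0:ℝ), -g (-x) := by
          simp [hodd]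
      _ = - ∫ x in Set.Iic (0:ℝ), g (-x) := by rw [integral_neg]
      _ = - ∫ x in Set.Ioi (0:ℝ), g x := by rw [h]
  have h2 : (∫ t, g t) = (∫ x in Set.Iic (0:ℝ), g x) + ∫ x in Set.Ioi (0:ℝ), g x := by
    rw [← setIntegral_union (Set.Iic_disjoint_Ioi le_rfl) measurableSet_Ioi
      hg.integrableOn hg.integrableOn, Set.Iic_union_Ioi, setIntegral_univ]
  rw [h2, h1]; ring

lemma sum_range_two_mul (h : ℕ → ℝ) (N : ℕ) :
    ∑ k ∈ Finset.range (2 * N), h k = ∑ j ∈ Finset.range N, (h (2 * j) + h (2 * j + 1)) := by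
  induction N with
  | zero => simp
  | succ n ih =>
      rw [Finset.sum_range_succ, ← ih, show 2 * (n + 1) = (2 * n + 1) + 1 by ring,
        Finset.sum_range_succ, Finset.sum_range_succ]
      ring

theorem laplace_method (N : ℕ) (f : ℝ → ℝ) (c : ℕ → ℝ) (M σ : ℝ)
    (hf : Continuous f) (heven : ∀ t : ℝ, f (-t) = f t)
    (htaylor : ∃ C : ℝ, ∀ t : ℝ,
      |f t - ∑ k ∈ Finset.range (2 * N), c k * t ^ k| ≤ C * |t| ^ (2 * N))
    (hbound : ∀ t : ℝ, |f t| ≤ M * Real.exp (σ * t ^ 2)) :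
    (fun z : ℝ =>
        (∫ t : ℝ, Real.exp (-z * t ^ 2) * f t) -
          Real.sqrt (π / z) * ∑ k ∈ Finset.range N, pochHalf k * c (2 * k) / z ^ k)
      =O[atTop] fun z : ℝ => z ^ (-(N : ℝ) - 1/2) := by
  obtain ⟨C, hC⟩ := htaylor
  have hC0 : 0 ≤ C := by
    have h := hC 1
    simp only [abs_one, one_pow, mul_one] at h
    exact (abs_nonneg _).trans h
  rw [isBigO_iff]
  refine ⟨C * (Real.sqrt π * pochHalf N), ?_⟩
  filter_upwards [eventually_gt_atTop (0 : ℝ)] with z hz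
  set P : ℝ → ℝ := fun t => ∑ k ∈ Finset.range (2 * N), c k * t ^ k with hP
  have hPc : Continuous P :=
    continuous_finset_sum _ fun k _ => continuous_const.mul (continuous_pow k)
  have hmono : ∀ k : ℕ, Integrable fun t : ℝ => t ^ k * Real.exp (-z * t ^ 2) :=
    fun k => integrable_pow_mul_gaussian hz k
  have hptbound : ∀ t : ℝ, ‖Real.exp (-z * t ^ 2) * (f t - P t)‖ ≤
      C * (t ^ (2 * N) * Real.exp (-z * t ^ 2)) := by
    intro t
    rw [Real.norm_eq_abs, abs_mul, abs_of_pos (Real.exp_pos _)]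
    calc Real.exp (-z * t ^ 2) * |f t - P t|
        ≤ Real.exp (-z * t ^ 2) * (C * |t| ^ (2 * N)) :=
          mul_le_mul_of_nonneg_left (hC t) (Real.exp_pos _).le
      _ = C * (t ^ (2 * N) * Real.exp (-z * t ^ 2)) := by
          rw [(even_two_mul N).pow_abs]; ring
  have hP_int : Integrable fun t : ℝ => Real.exp (-z * t ^ 2) * P t := by
    have h : Integrable fun t : ℝ =>
        ∑ k ∈ Finset.range (2 * N), c k * (t ^ k * Real.exp (-z * t ^ 2)) :=
      integrable_finset_sum _ fun k _ => (hmono k).const_mul (c k)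
    refine h.congr (Filter.Eventually.of_forall fun t => ?_)
    simp only [hP, Finset.sum_mul, Finset.mul_sum]
    exact Finset.sum_congr rfl fun k _ => by ring
  have hR_int : Integrable fun t : ℝ => Real.exp (-z * t ^ 2) * (f t - P t) := by
    refine Integrable.mono' ((hmono (2 * N)).const_mul C)
      (((Real.continuous_exp.comp (by fun_prop)).mul (hf.sub hPc)).aestronglyMeasurable)
      (Filter.Eventually.of_forall hptbound)
  have hf_int : Integrable fun t : ℝ => Real.exp (-z * t ^ 2) * f t := by
    refine (hR_int.add hP_int).congr (Filter.Eventually.of_forall fun t => ?_)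
    simp only [Pi.add_apply]
    ring
  have hodd : ∀ j : ℕ, (∫ t : ℝ, Real.exp (-z * t ^ 2) * t ^ (2 * j + 1)) = 0 := by
    intro j
    refine integral_odd_zero
      ((hmono (2 * j + 1)).congr (Filter.Eventually.of_forall fun t => by ring))
      fun t => ?_
    rw [show ((-t : ℝ)) ^ 2 = t ^ 2 from neg_sq t, (odd_two_mul_add_one j).neg_pow]
    ring
  have hmain : (∫ t : ℝ, Real.exp (-z * t ^ 2) * P t) =
      Real.sqrt (π / z) * ∑ k ∈ Finset.range N, pochHalf k * c (2 * k) / z ^ k := by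
    have h1 : (∫ t : ℝ, Real.exp (-z * t ^ 2) * P t) =
        ∑ k ∈ Finset.range (2 * N), c k * ∫ t : ℝ, Real.exp (-z * t ^ 2) * t ^ k := by
      rw [show (fun t : ℝ => Real.exp (-z * t ^ 2) * P t)
          = fun t : ℝ => ∑ k ∈ Finset.range (2 * N),
              c k * (Real.exp (-z * t ^ 2) * t ^ k) from
        funext fun t => by
          simp only [hP, Finset.mul_sum]
          exact Finset.sum_congr rfl fun k _ => by ring]
      rw [integral_finset_sum _ fun k _ =>
        ((hmono k).const_mul (c k)).congr (Filter.Eventually.of_forall fun t => by ring)]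
      exact Finset.sum_congr rfl fun k _ => MeasureTheory.integral_const_mul _ _
    rw [h1, sum_range_two_mul (fun k => c k * ∫ t : ℝ, Real.exp (-z * t ^ 2) * t ^ k) N,
      Finset.mul_sum]
    refine Finset.sum_congr rfl fun j _ => ?_
    rw [hodd j, mul_zero, add_zero, gaussian_moment hz]
    linear_combination (-(pochHalf j * c (2 * j))) * (sqrt_pi_div hz j)
  have key : ((∫ t : ℝ, Real.exp (-z * t ^ 2) * f t) -
      Real.sqrt (π / z) * ∑ k ∈ Finset.range N, pochHalf k * c (2 * k) / z ^ k)
      = ∫ t : ℝ, Real.exp (-z * t ^ 2) * (f t - P t) := by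
    rw [← hmain, ← integral_sub hf_int hP_int]
    congr 1
    funext t
    ring
  rw [key]
  have hnorm : ‖(z : ℝ) ^ (-(N : ℝ) - 1/2)‖ = z ^ (-(N : ℝ) - 1/2) :=
    Real.norm_of_nonneg (Real.rpow_nonneg hz.le _)
  calc ‖∫ t : ℝ, Real.exp (-z * t ^ 2) * (f t - P t)‖
      ≤ ∫ t : ℝ, C * (t ^ (2 * N) * Real.exp (-z * t ^ 2)) :=
        norm_integral_le_of_norm_le ((hmono (2 * N)).const_mul C)
          (Filter.Eventually.of_forall hptbound)
    _ = C * (Real.sqrt π * pochHalf N * z ^ (-(N : ℝ) - 1/2)) := by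
        rw [MeasureTheory.integral_const_mul]
        congr 1
        rw [← gaussian_moment hz N]
        exact integral_congr_ae (Filter.Eventually.of_forall fun t => by ring)
    _ = C * (Real.sqrt π * pochHalf N) * ‖(z : ℝ) ^ (-(N : ℝ) - 1/2)‖ := by
        rw [hnorm]; ring
end

section
/- For n ≥ 1 and complex z with z ≠ 1 and |z| ≤ 1, the partial sum S_n(z) = ∑_{k=1}^n z^k/k satisfies S_n(z) = −log(1−z) − z^{n+1} ∫_0^∞ e^{-ns}/(e^s − z) ds. -/
open MeasureTheory Complex Set Filter

namespace PartialSumLogAux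

lemma lower {z : ℂ} (hz : z ≠ 1) (hz1 : ‖z‖ ≤ 1) {t : ℝ} (ht0 : 0 ≤ t) (ht1 : t ≤ 1) :
    ‖1 - z‖ / 2 ≤ ‖1 - z * t‖ := by
  have habs : ‖z * t‖ ≤ t := by
    rw [norm_mul, Complex.norm_real, Real.norm_eq_abs, _root_.abs_of_nonneg ht0]
    nlinarith [norm_nonneg z]
  rcases le_or_gt (‖1 - z‖ / 2) (1 - t) with h | h
  · have h1 : ‖(1:ℂ)‖ - ‖z * t‖ ≤ ‖1 - z * t‖ := by
      simpa using norm_sub_norm_le (1 : ℂ) (z * t)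
    simp only [norm_one] at h1
    linarith
  · have h2 : ‖1 - z‖ ≤ ‖1 - z * t‖ + ‖z * t - z‖ := by
      simpa using norm_sub_le_norm_sub_add_norm_sub (1:ℂ) (z * t) z
    have h3 : ‖z * t - z‖ ≤ 1 - t := by
      have : z * t - z = z * ((t : ℂ) - 1) := by ring
      rw [this, norm_mul]
      have : ‖(t : ℂ) - 1‖ = 1 - t := by
        rw [show ((t : ℂ) - 1) = ((t - 1 : ℝ) : ℂ) by push_cast; ring, Complex.norm_real, Real.norm_eq_abs,
          abs_of_nonpos (by linarith)]
        ring
      rw [this]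
      nlinarith [norm_nonneg z]
    linarith

lemma factor (z : ℂ) (s : ℝ) :
    ((Real.exp s : ℂ)) - z = (Real.exp s : ℂ) * (1 - z * (Real.exp (-s) : ℂ)) := by
  have h : (Real.exp s : ℂ) * (Real.exp (-s) : ℂ) = 1 := by
    rw [← Complex.ofReal_mul, ← Real.exp_add]; simp
  linear_combination z * h

lemma lower' {z : ℂ} (hz : z ≠ 1) (hz1 : ‖z‖ ≤ 1) {s : ℝ} (hs : 0 ≤ s) :
    Real.exp s * (‖1 - z‖ / 2) ≤ ‖(Real.exp s : ℂ) - z‖ := by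
  rw [factor, norm_mul, Complex.norm_real, Real.norm_eq_abs, abs_of_pos (Real.exp_pos s)]
  have h1 := lower hz hz1 (Real.exp_nonneg (-s)) (Real.exp_le_one_iff.mpr (by linarith))
  nlinarith [Real.exp_pos s]

lemma habspos {z : ℂ} (hz : z ≠ 1) : 0 < ‖1 - z‖ := by
  simpa [sub_ne_zero] using (sub_ne_zero.mpr (Ne.symm hz))

lemma denom_ne {z : ℂ} (hz : z ≠ 1) (hz1 : ‖z‖ ≤ 1) {s : ℝ} (hs : 0 ≤ s) :
    ((Real.exp s : ℂ)) - z ≠ 0 := by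
  have := lower' hz hz1 hs
  have h2 := habspos hz
  intro h
  rw [h, norm_zero] at this
  nlinarith [Real.exp_pos s]

lemma integrable_aux {z : ℂ} (hz : z ≠ 1) (hz1 : ‖z‖ ≤ 1) {a : ℝ} (ha : 0 ≤ a) :
    IntegrableOn (fun s : ℝ => (Real.exp (-a * s) : ℂ) / ((Real.exp s : ℂ) - z)) (Ioi 0) := by
  have hc := habspos hz
  apply Integrable.mono'
    ((exp_neg_integrableOn_Ioi 0 (by linarith : (0:ℝ) < a + 1)).const_mul
      (2 / ‖1 - z‖))
  · apply ContinuousOn.aestronglyMeasurable _ measurableSet_Ioi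
    apply ContinuousOn.div
    · exact (Complex.continuous_ofReal.comp (Real.continuous_exp.comp
        (continuous_const.mul continuous_id))).continuousOn
    · exact (Complex.continuous_ofReal.comp Real.continuous_exp).sub continuous_const
        |>.continuousOn
    · intro s hs
      exact denom_ne hz hz1 (le_of_lt hs)
  · filter_upwards [ae_restrict_mem measurableSet_Ioi] with s hs
    have hs0 : (0:ℝ) ≤ s := le_of_lt hs
    rw [norm_div, Complex.norm_real, Real.norm_eq_abs,
      abs_of_pos (Real.exp_pos _)]
    have hlow := lower' hz hz1 hs0
    have hpos : 0 < Real.exp s * (‖1 - z‖ / 2) := by positivity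
    calc Real.exp (-a * s) / ‖(Real.exp s : ℂ) - z‖
        ≤ Real.exp (-a * s) / (Real.exp s * (‖1 - z‖ / 2)) := by
          gcongr
      _ = 2 / ‖1 - z‖ * Real.exp (-(a + 1) * s) := by
          rw [show (-(a + 1) * s) = -a * s + (-s) by ring, Real.exp_add, Real.exp_neg]
          field_simp

lemma slit {z : ℂ} (hz : z ≠ 1) (hz1 : ‖z‖ ≤ 1) {s : ℝ} (hs : 0 ≤ s) :
    (1 - z * (Real.exp (-s) : ℂ)) ∈ Complex.slitPlane := by
  set w := 1 - z * (Real.exp (-s) : ℂ) with hw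
  have hwne : w ≠ 0 := by
    intro h
    have := lower hz hz1 (Real.exp_nonneg (-s)) (Real.exp_le_one_iff.mpr (by linarith))
    rw [← hw, h, norm_zero] at this
    have := habspos hz
    linarith
  have hre : 0 ≤ w.re := by
    have h1 : w.re = 1 - z.re * Real.exp (-s) := by
      simp [hw, Complex.sub_re, Complex.mul_re, Complex.ofReal_re, Complex.ofReal_im,
        -Complex.ofReal_exp]
    have h2 : z.re ≤ 1 := le_trans (Complex.re_le_norm z) hz1
    have h3 : Real.exp (-s) ≤ 1 := Real.exp_le_one_iff.mpr (by linarith)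
    have h4 : 0 ≤ Real.exp (-s) := Real.exp_nonneg _
    rw [h1]
    nlinarith [Complex.abs_re_le_norm z, abs_nonneg z.re, le_abs_self z.re]
  rcases lt_or_eq_of_le hre with h | h
  · exact Or.inl h
  · refine Or.inr fun him => hwne ?_
    exact Complex.ext (by simpa using h.symm) (by simpa using him)

lemma base {z : ℂ} (hz : z ≠ 1) (hz1 : ‖z‖ ≤ 1) :
    z * (∫ s in Ioi (0:ℝ), (Real.exp (-(0:ℝ) * s) : ℂ) / ((Real.exp s : ℂ) - z)) =
      -Complex.log (1 - z) := by
  have hc := habspos hz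
  -- FTC for f s = log (1 - z * exp (-s))
  set f : ℝ → ℂ := fun s => Complex.log (1 - z * (Real.exp (-s) : ℂ)) with hf
  set f' : ℝ → ℂ := fun s => z * (Real.exp (-s) : ℂ) / (1 - z * (Real.exp (-s) : ℂ)) with hf'
  have hwderiv : ∀ s : ℝ, HasDerivAt (fun t : ℝ => 1 - z * (Real.exp (-t) : ℂ))
      (z * (Real.exp (-s) : ℂ)) s := by
    intro s
    have h1 : HasDerivAt (fun t : ℝ => Real.exp (-t)) (-Real.exp (-s)) s := by
      simpa [Function.comp_def] using (Real.hasDerivAt_exp (-s)).comp s (hasDerivAt_neg s)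
    have h2 := h1.ofReal_comp
    have h3 := (h2.const_mul z).const_sub 1
    rw [show z * (Real.exp (-s) : ℂ) = -(z * ((-Real.exp (-s) : ℝ) : ℂ)) by push_cast; ring]
    exact h3
  have hderiv : ∀ s ∈ Ioi (0:ℝ), HasDerivAt f (f' s) s := by
    intro s hs
    exact ((hwderiv s).clog_real (slit hz hz1 (le_of_lt hs)))
  have hwne : ∀ s : ℝ, 0 ≤ s → (1 - z * (Real.exp (-s) : ℂ)) ≠ 0 := by
    intro s hs h
    have := lower hz hz1 (Real.exp_nonneg (-s)) (Real.exp_le_one_iff.mpr (by linarith))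
    rw [h, norm_zero] at this
    linarith
  have hcont : ContinuousWithinAt f (Ici (0:ℝ)) 0 := by
    apply ContinuousAt.continuousWithinAt
    apply ContinuousAt.clog
    · exact (continuous_const.sub (continuous_const.mul (Complex.continuous_ofReal.comp
        (Real.continuous_exp.comp continuous_neg)))).continuousAt
    · exact slit hz hz1 le_rfl
  have htends : Tendsto f atTop (nhds 0) := by
    have h1 : Tendsto (fun s : ℝ => 1 - z * (Real.exp (-s) : ℂ)) atTop (nhds 1) := by
      have h2 : Tendsto (fun s : ℝ => Real.exp (-s)) atTop (nhds 0) :=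
        Real.tendsto_exp_neg_atTop_nhds_zero
      have h3 : Tendsto (fun s : ℝ => (Real.exp (-s) : ℂ)) atTop (nhds (((0:ℝ):ℂ))) :=
        (Complex.continuous_ofReal.tendsto 0).comp h2
      have h4 := (h3.const_mul z).const_sub (1 : ℂ)
      rw [Complex.ofReal_zero, mul_zero, sub_zero] at h4
      exact h4
    have h5 := h1.clog Complex.one_mem_slitPlane
    rw [Complex.log_one] at h5
    exact h5
  have hintf' : IntegrableOn f' (Ioi (0:ℝ)) := by
    apply IntegrableOn.congr_fun ((integrable_aux hz hz1 (le_refl (0:ℝ))).const_mul z) _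
      measurableSet_Ioi
    intro s hs
    have hs0 : (0:ℝ) ≤ s := le_of_lt hs
    have hne1 := denom_ne hz hz1 hs0
    have hne2 := hwne s hs0
    simp only [hf', neg_zero, zero_mul, Real.exp_zero, Complex.ofReal_one]
    have hinv : ((Real.exp s : ℂ))⁻¹ = (Real.exp (-s) : ℂ) := by
      rw [Real.exp_neg, Complex.ofReal_inv]
    rw [factor z s, one_div, mul_inv, hinv, div_eq_mul_inv]
    ring
  have key := integral_Ioi_of_hasDerivAt_of_tendsto hcont hderiv hintf' htends
  have hf0 : f 0 = Complex.log (1 - z) := by simp [hf]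
  rw [hf0] at key
  rw [← integral_const_mul]
  rw [show (∫ s in Ioi (0:ℝ), z * ((Real.exp (-(0:ℝ) * s) : ℂ) / ((Real.exp s : ℂ) - z)))
      = ∫ s in Ioi (0:ℝ), f' s from ?_, key]
  · ring
  · apply setIntegral_congr_fun measurableSet_Ioi
    intro s hs
    have hs0 : (0:ℝ) ≤ s := le_of_lt hs
    have hne1 := denom_ne hz hz1 hs0
    have hne2 := hwne s hs0
    simp only [hf', neg_zero, zero_mul, Real.exp_zero, Complex.ofReal_one]
    have hinv : ((Real.exp s : ℂ))⁻¹ = (Real.exp (-s) : ℂ) := by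
      rw [Real.exp_neg, Complex.ofReal_inv]
    rw [factor z s, one_div, mul_inv, hinv, div_eq_mul_inv]
    ring

lemma rec_step {z : ℂ} (hz : z ≠ 1) (hz1 : ‖z‖ ≤ 1) (n : ℕ) :
    (∫ s in Ioi (0:ℝ), (Real.exp (-(n : ℝ) * s) : ℂ) / ((Real.exp s : ℂ) - z)) =
      1 / ((n : ℂ) + 1) +
        z * ∫ s in Ioi (0:ℝ), (Real.exp (-((n : ℝ) + 1) * s) : ℂ) / ((Real.exp s : ℂ) - z) := by
  have hA : IntegrableOn (fun s : ℝ => (Real.exp (-((n:ℝ) + 1) * s) : ℂ)) (Ioi 0) := by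
    exact (exp_neg_integrableOn_Ioi 0 (by positivity : (0:ℝ) < (n:ℝ) + 1)).ofReal
  have hB := (integrable_aux hz hz1 (by positivity : (0:ℝ) ≤ (n:ℝ) + 1)).const_mul z
  have hsplit : (∫ s in Ioi (0:ℝ), (Real.exp (-(n : ℝ) * s) : ℂ) / ((Real.exp s : ℂ) - z)) =
      ∫ s in Ioi (0:ℝ), ((Real.exp (-((n:ℝ) + 1) * s) : ℂ) +
        z * ((Real.exp (-((n:ℝ) + 1) * s) : ℂ) / ((Real.exp s : ℂ) - z))) := by
    apply setIntegral_congr_fun measurableSet_Ioi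
    intro s hs
    have hs0 : (0:ℝ) ≤ s := le_of_lt hs
    have hne := denom_ne hz hz1 hs0
    have hkey : (Real.exp (-((n:ℝ) + 1) * s) : ℂ) * (Real.exp s : ℂ)
        = (Real.exp (-(n:ℝ) * s) : ℂ) := by
      rw [← Complex.ofReal_mul, ← Real.exp_add]
      ring_nf
    dsimp only
    rw [← mul_div_assoc, add_div' _ _ _ hne, div_eq_div_iff hne hne]
    linear_combination (-((Real.exp s : ℂ) - z)) * hkey
  rw [hsplit, integral_add hA hB, integral_const_mul]
  congr 1
  have hofr : (∫ s in Ioi (0:ℝ), (Real.exp (-((n:ℝ) + 1) * s) : ℂ))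
      = ((∫ s in Ioi (0:ℝ), Real.exp (-((n:ℝ) + 1) * s) : ℝ) : ℂ) := integral_ofReal
  rw [hofr]
  have h1 : (∫ s in Ioi (0:ℝ), Real.exp (-((n:ℝ) + 1) * s)) = ((n:ℝ) + 1)⁻¹ := by
    have h2 := integral_comp_mul_left_Ioi (fun x => Real.exp (-x)) 0
      (by positivity : (0:ℝ) < (n:ℝ) + 1)
    simp only [mul_zero, integral_exp_neg_Ioi, neg_zero, Real.exp_zero, smul_eq_mul,
      mul_one] at h2
    rw [← h2]
    apply setIntegral_congr_fun measurableSet_Ioi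
    intro s _
    ring_nf
  rw [h1, Complex.ofReal_inv]
  push_cast
  rw [one_div]

lemma key (z : ℂ) (hz : z ≠ 1) (hz1 : ‖z‖ ≤ 1) : ∀ n : ℕ,
    ∑ k ∈ Finset.range n, z ^ (k + 1) / (k + 1) =
      -Complex.log (1 - z) -
        z ^ (n + 1) *
          ∫ s in Set.Ioi (0 : ℝ),
            (Real.exp (-(n : ℝ) * s) : ℂ) / ((Real.exp s : ℂ) - z) := by
  intro n
  induction n with
  | zero =>
      simp only [Finset.range_zero, Finset.sum_empty, Nat.cast_zero, zero_add, pow_one]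
      rw [← base hz hz1]
      ring
  | succ n ih =>
      rw [Finset.sum_range_succ, ih]
      simp only [Nat.cast_succ]
      rw [rec_step hz hz1 n]
      ring

end PartialSumLogAux

theorem partial_sum_log_integral (n : ℕ) (hn : 1 ≤ n) (z : ℂ) (hz : z ≠ 1)
    (hz1 : ‖z‖ ≤ 1) :
    ∑ k ∈ Finset.range n, z ^ (k + 1) / (k + 1) =
      -Complex.log (1 - z) -
        z ^ (n + 1) *
          ∫ s in Set.Ioi (0 : ℝ),
            (Real.exp (-(n : ℝ) * s) : ℂ) / ((Real.exp s : ℂ) - z) :=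
  PartialSumLogAux.key z hz hz1 n
end
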